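/- arXiv:math-ph/9904040 — 2 statements merged into one kernel-verified Lean document; each statement's English description precedes it below -/
import Mathlib

section
/- Let m₁ ≥ m₂ ≥ ... ≥ m_M > 0 and n₁ ≥ ... ≥ n_N > 0 be real numbers, S = H^{M+N} for an infinite-dimensional Hilbert space H, and let J⁻¹(m,n) ⊂ S be the set of tuples (ψ₁,...,ψ_{M+N}) such that the ψᵢ are mutually orthogonal, ‖ψᵢ‖² = mᵢ for i = 1,...,M, and ‖ψ_{M+j}‖² = n_{N+1-j} for j = 1,...,N. Then every ψ in J⁻¹(m,n) has all components ψᵢ nonzero, and the stabilizer of ψ in U(M,N) (acting by ψᵢ ↦ Σⱼ Uⱼᵢ ψⱼ) is trivial. -/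
open scoped Matrix
/-- for the level set J⁻¹(m,n) ⊂ S = H^{M+N} (H infinite-dimensional),
consisting of tuples with mutually orthogonal components of prescribed norms
‖ψᵢ‖² = mᵢ (i ≤ M), ‖ψ_{M+j}‖² = n_{N+1-j}, every ψ ∈ J⁻¹(m,n) has all components
nonzero, and its stabilizer in U(M,N) (acting by ψᵢ ↦ Σⱼ Uⱼᵢψⱼ) is trivial. -/
theorem stmt10 {H : Type*} [NormedAddCommGroup H] [InnerProductSpace ℂ H] [CompleteSpace H]
    (hinf : ¬ FiniteDimensional ℂ H) (M N : ℕ)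
    (m : Fin M → ℝ) (n : Fin N → ℝ)
    (hm : ∀ i j : Fin M, i ≤ j → m j ≤ m i) (hmpos : ∀ i, 0 < m i)
    (hn : ∀ i j : Fin N, i ≤ j → n j ≤ n i) (hnpos : ∀ j, 0 < n j)
    (ψ : Fin (M + N) → H)
    (horth : ∀ i j, i ≠ j → (inner ℂ (ψ i) (ψ j) : ℂ) = 0)
    (hmnorm : ∀ i : Fin M, ‖ψ (Fin.castAdd N i)‖ ^ 2 = m i)
    (hnnorm : ∀ j : Fin N, ‖ψ (Fin.natAdd M j)‖ ^ 2 = n (Fin.rev j)) :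
    (∀ i, ψ i ≠ 0) ∧
    ∀ U : Matrix (Fin (M + N)) (Fin (M + N)) ℂ,
      Uᴴ * Matrix.diagonal (fun i : Fin (M + N) => if (i : ℕ) < M then (1 : ℂ) else -1) * U =
        Matrix.diagonal (fun i : Fin (M + N) => if (i : ℕ) < M then (1 : ℂ) else -1) →
      (∀ i, ∑ j, U j i • ψ j = ψ i) → U = 1 := by
  have hne : ∀ i, ψ i ≠ 0 := by
    intro i
    induction i using Fin.addCases with
    | left i =>
      intro h
      have := hmnorm i
      rw [h] at this
      simp at this
      exact absurd this (hmpos i).ne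
    | right j =>
      intro h
      have := hnnorm j
      rw [h] at this
      simp at this
      exact absurd this (hnpos (Fin.rev j)).ne
  refine ⟨hne, ?_⟩
  intro U _ hfix
  ext k i
  have h := congrArg (fun v => (inner ℂ (ψ k) v : ℂ)) (hfix i)
  simp only [inner_sum, inner_smul_right] at h
  rw [Finset.sum_eq_single k] at h
  · have hk : (inner ℂ (ψ k) (ψ k) : ℂ) ≠ 0 := by
      simpa [inner_self_eq_zero] using hne k
    by_cases hki : k = i
    · subst hki
      have := mul_right_cancel₀ hk (h.trans (one_mul _).symm)
      simp [this]
    · rw [horth k i hki] at h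
      have : U k i = 0 := by
        rcases mul_eq_zero.mp h with h' | h'
        · exact h'
        · exact absurd h' hk
      simp [Matrix.one_apply, this, hki]
  · intro b _ hb
    rw [horth k b (Ne.symm hb), mul_zero]
  · intro hk
    exact absurd (Finset.mem_univ k) hk
end

section
/- With the level set J⁻¹(m,n) ⊂ S = H^{M+N} as above (components mutually orthogonal with prescribed nonzero norms), the action of U(M,N) on J⁻¹(m,n) is proper: if ψ⁽ⁿ⁾ → ψ in J⁻¹(m,n), U⁽ⁿ⁾ ∈ U(M,N), and U⁽ⁿ⁾ψ⁽ⁿ⁾ converges in J⁻¹(m,n), then (U⁽ⁿ⁾) has a convergent subsequence in U(M,N). -/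
open scoped Matrix

/-- the U(M,N)-action on the level set J⁻¹(m,n) ⊂ H^{M+N} (tuples
with mutually orthogonal components of prescribed nonzero norms) is proper: if
ψ⁽ᵏ⁾ → ψ in J⁻¹(m,n), U⁽ᵏ⁾ ∈ U(M,N) and U⁽ᵏ⁾ψ⁽ᵏ⁾ converges in J⁻¹(m,n), then
(U⁽ᵏ⁾) has a subsequence converging in U(M,N). -/
theorem stmt11 {H : Type*} [NormedAddCommGroup H] [InnerProductSpace ℂ H] [CompleteSpace H]
    (M N : ℕ) (m : Fin M → ℝ) (n : Fin N → ℝ)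
    (hmpos : ∀ i, 0 < m i) (hnpos : ∀ j, 0 < n j) :
    let D : Matrix (Fin (M + N)) (Fin (M + N)) ℂ :=
      Matrix.diagonal (fun i : Fin (M + N) => if (i : ℕ) < M then (1 : ℂ) else -1)
    let level : Set (Fin (M + N) → H) :=
      {ψ | (∀ i j, i ≠ j → (inner ℂ (ψ i) (ψ j) : ℂ) = 0) ∧
        (∀ i : Fin M, ‖ψ (Fin.castAdd N i)‖ ^ 2 = m i) ∧
        (∀ j : Fin N, ‖ψ (Fin.natAdd M j)‖ ^ 2 = n (Fin.rev j))}
    ∀ (ψseq : ℕ → (Fin (M + N) → H)) (ψ χ : Fin (M + N) → H)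
      (Useq : ℕ → Matrix (Fin (M + N)) (Fin (M + N)) ℂ),
      (∀ k, ψseq k ∈ level) → ψ ∈ level → χ ∈ level →
      Filter.Tendsto ψseq Filter.atTop (nhds ψ) →
      (∀ k, (Useq k)ᴴ * D * Useq k = D) →
      Filter.Tendsto (fun k => fun i => ∑ j, (Useq k) j i • ψseq k j)
        Filter.atTop (nhds χ) →
      ∃ (φ : ℕ → ℕ) (U : Matrix (Fin (M + N)) (Fin (M + N)) ℂ),
        StrictMono φ ∧ Uᴴ * D * U = D ∧
        Filter.Tendsto (Useq ∘ φ) Filter.atTop (nhds U) := by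
  intro D level ψseq ψ χ Useq hseq hψ hχ hψconv hUrel hΦconv
  -- squared norms are the same constants along the sequence
  have hnormconst : ∀ k j, ‖ψseq k j‖ ^ 2 = ‖ψ j‖ ^ 2 := by
    intro k j
    refine Fin.addCases (fun i => ?_) (fun i => ?_) j
    · rw [(hseq k).2.1 i, (hψ).2.1 i]
    · rw [(hseq k).2.2 i, (hψ).2.2 i]
  have hpos : ∀ j, 0 < ‖ψ j‖ ^ 2 := by
    intro j
    refine Fin.addCases (fun i => ?_) (fun i => ?_) j
    · rw [(hψ).2.1 i]; exact hmpos i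
    · rw [(hψ).2.2 i]; exact hnpos (Fin.rev i)
  have hne : ∀ j, (‖ψ j‖ : ℂ) ^ 2 ≠ 0 := by
    intro j
    have := (hpos j).ne'
    intro h
    exact this (by exact_mod_cast h)
  -- key identity
  have key : ∀ k j i, Useq k j i =
      (inner ℂ (ψseq k j) (∑ l, (Useq k) l i • ψseq k l) : ℂ) / (‖ψ j‖ : ℂ) ^ 2 := by
    intro k j i
    have : (inner ℂ (ψseq k j) (∑ l, (Useq k) l i • ψseq k l) : ℂ)
        = Useq k j i * (‖ψ j‖ : ℂ) ^ 2 := by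
      rw [inner_sum]
      rw [Finset.sum_eq_single j]
      · rw [inner_smul_right, inner_self_eq_norm_sq_to_K]
        norm_cast
        rw [hnormconst k j]
        rfl
      · intro l _ hl
        rw [inner_smul_right, (hseq k).1 j l (Ne.symm hl), mul_zero]
      · simp
    rw [this, mul_div_cancel_right₀ _ (hne j)]
  set U : Matrix (Fin (M + N)) (Fin (M + N)) ℂ :=
    fun j i => (inner ℂ (ψ j) (χ i) : ℂ) / (‖ψ j‖ : ℂ) ^ 2 with hU
  have hUconv : Filter.Tendsto Useq Filter.atTop (nhds U) := by
    refine tendsto_pi_nhds.2 ?_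
    intro j
    rw [tendsto_pi_nhds]
    intro i
    have h1 : Filter.Tendsto (fun k => ψseq k j) Filter.atTop (nhds (ψ j)) :=
      (continuous_apply j).continuousAt.tendsto.comp hψconv
    have h2 : Filter.Tendsto (fun k => ∑ l, (Useq k) l i • ψseq k l)
        Filter.atTop (nhds (χ i)) :=
      (continuous_apply i).continuousAt.tendsto.comp hΦconv
    have h3 : Filter.Tendsto
        (fun k => (inner ℂ (ψseq k j) (∑ l, (Useq k) l i • ψseq k l) : ℂ) / (‖ψ j‖ : ℂ) ^ 2)
        Filter.atTop (nhds ((inner ℂ (ψ j) (χ i) : ℂ) / (‖ψ j‖ : ℂ) ^ 2)) :=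
      (h1.inner h2).div_const _
    exact h3.congr (fun k => (key k j i).symm)
  refine ⟨id, U, strictMono_id, ?_, hUconv⟩
  have hcont : Continuous (fun X : Matrix (Fin (M + N)) (Fin (M + N)) ℂ => Xᴴ * D * X) :=
    ((continuous_id.matrix_conjTranspose.matrix_mul continuous_const).matrix_mul continuous_id)
  have ht : Filter.Tendsto (fun k => (Useq k)ᴴ * D * Useq k) Filter.atTop
      (nhds (Uᴴ * D * U)) := (hcont.continuousAt.tendsto).comp hUconv
  have ht' : Filter.Tendsto (fun _ : ℕ => D) Filter.atTop (nhds (Uᴴ * D * U)) :=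
    ht.congr (fun k => hUrel k)
  exact tendsto_nhds_unique ht' tendsto_const_nhds
end
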